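/- Let P be a finite poset and suppose there is a linear map sending each order-ideal indicator 1_p to an element Σ_{q ≥ p} c_{q,p} T_q^- of the span of antichain indicators, with c_{p,p} ≠ 0 for all p, such that 1_p - Σ_{q≥p} c_{q,p} T_q^- lies in Span(T_r : r ∈ P) for every p. Then dim A_T(P) = dim I_T(P), where I_T(P) (resp. A_T(P)) is the set of statistics in Span(1_p : p∈P) (resp. Span(T_p^- : p∈P)) expressible as a constant plus a linear combination of the toggleability statistics T_p. -/

import Mathlib

open scoped Classical

noncomputable section

/-- The set of order ideals (lower sets) of `α`. -/
def J (α : Type*) [PartialOrder α] := {I : Set α // IsLowerSet I}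

variable {α : Type*} [PartialOrder α] [Fintype α]

/-- The order-ideal indicator statistic `1_p`. -/
def indF (p : α) : J α → ℝ := fun I => if p ∈ I.1 then 1 else 0

/-- The antichain indicator statistic `T_p^-`: indicator of `p ∈ Max I`. -/
def tmF (p : α) : J α → ℝ := fun I => if p ∈ I.1 ∧ ∀ y ∈ I.1, p ≤ y → p = y then 1 else 0

/-- The toggleability statistic `T_p`. -/
def togF (p : α) : J α → ℝ := fun I =>
  (if p ∉ I.1 ∧ ∀ y, y ∉ I.1 → y ≤ p → y = p then 1 else 0)
    - (if p ∈ I.1 ∧ ∀ y ∈ I.1, p ≤ y → p = y then 1 else 0)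

/-- The principal order ideal `↓q` as an element of `J α`. -/
def dn (q : α) : J α := ⟨{x | x ≤ q}, fun a b hba ha => hba.trans ha⟩

lemma indF_dn (p q : α) : indF p (dn q) = if p ≤ q then 1 else 0 := rfl

lemma tmF_dn (p q : α) : tmF p (dn q) = if p = q then 1 else 0 := by
  unfold tmF dn
  by_cases h : p = q
  · subst h
    rw [if_pos rfl, if_pos ⟨le_refl p, fun y hy hpy => le_antisymm hpy hy⟩]
  · rw [if_neg h, if_neg (fun hh => h (hh.2 q le_rfl hh.1))]

/-- Triangular system with nonzero diagonal has only trivial solution. -/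
lemma triangular_zero (d : α → α → ℝ) (hd : ∀ p, d p p ≠ 0) (x : α → ℝ)
    (h : ∀ r : α, ∑ p ∈ Finset.univ.filter (fun p => p ≤ r), d r p * x p = 0) :
    x = 0 := by
  have : ∀ r : α, x r = 0 := by
    intro r
    induction r using WellFoundedLT.induction with
    | ind r ih =>
      have h0 := h r
      have hsplit : Finset.univ.filter (fun p => p ≤ r)
          = insert r (Finset.univ.filter (fun p => p < r)) := by
        ext p
        simp [Finset.mem_filter, Finset.mem_insert, le_iff_lt_or_eq, or_comm]
      rw [hsplit, Finset.sum_insert (by simp)] at h0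
      have hz : ∑ p ∈ Finset.univ.filter (fun p => p < r), d r p * x p = 0 := by
        apply Finset.sum_eq_zero
        intro p hp
        rw [ih p (Finset.mem_filter.mp hp).2, mul_zero]
      rw [hz, add_zero] at h0
      exact (mul_eq_zero.mp h0).resolve_left (hd r)
  funext r; exact this r

/-- If each indicator `1_p` is `≡`-equivalent (mod the span of the toggles `T_r`) to a
combination `Σ_{q ≥ p} c_{q,p} T_q^-` with `c_{p,p} ≠ 0`, then
`dim A_T(P) = dim I_T(P)`. -/
theorem stmt_10 (c : α → α → ℝ) (hc : ∀ p, c p p ≠ 0)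
    (hrel : ∀ p : α,
      indF p - (∑ q ∈ Finset.univ.filter (fun q => p ≤ q), c q p • tmF q)
        ∈ Submodule.span ℝ (Set.range (togF (α := α)))) :
    Module.finrank ℝ
        ↥(Submodule.span ℝ (Set.range (tmF (α := α))) ⊓
          (Submodule.span ℝ (Set.range (togF (α := α))) ⊔
            Submodule.span ℝ {(fun _ => 1 : J α → ℝ)}))
      = Module.finrank ℝ
        ↥(Submodule.span ℝ (Set.range (indF (α := α))) ⊓
          (Submodule.span ℝ (Set.range (togF (α := α))) ⊔
            Submodule.span ℝ {(fun _ => 1 : J α → ℝ)})) := by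
  haveI : Finite (J α) := by unfold J; infer_instance
  haveI : Fintype (J α) := Fintype.ofFinite _
  set S : Submodule ℝ (J α → ℝ) := Submodule.span ℝ (Set.range (togF (α := α))) with hS
  set C : Submodule ℝ (J α → ℝ) := Submodule.span ℝ {(fun _ => 1 : J α → ℝ)} with hC
  set W : Submodule ℝ (J α → ℝ) := S ⊔ C with hW
  -- linear maps
  set Ind : (α → ℝ) →ₗ[ℝ] (J α → ℝ) := Fintype.linearCombination ℝ (indF (α := α)) with hInd
  set g : α → (J α → ℝ) :=
    fun p => ∑ q ∈ Finset.univ.filter (fun q => p ≤ q), c q p • tmF q with hg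
  set L : (α → ℝ) →ₗ[ℝ] (J α → ℝ) := Fintype.linearCombination ℝ g with hL
  set T : (α → ℝ) →ₗ[ℝ] (J α → ℝ) := Fintype.linearCombination ℝ (tmF (α := α)) with hT
  have hIndapp : ∀ x, Ind x = ∑ p, x p • indF p := fun x => rfl
  have hLapp : ∀ x, L x = ∑ p, x p • g p := fun x => rfl
  have hTapp : ∀ x, T x = ∑ p, x p • tmF p := fun x => rfl
  -- injectivity of Ind
  have hIndinj : Function.Injective Ind := by
    rw [← LinearMap.ker_eq_bot, LinearMap.ker_eq_bot']
    intro x hx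
    refine triangular_zero (fun _ _ => 1) (fun _ => one_ne_zero) x (fun r => ?_)
    have := congrFun hx (dn r)
    simp only [hIndapp, Finset.sum_apply, Pi.smul_apply, Pi.zero_apply, smul_eq_mul,
      indF_dn, mul_ite, mul_one, mul_zero] at this
    rw [Finset.sum_filter]
    simpa [one_mul] using this
  -- injectivity of T
  have hTinj : Function.Injective T := by
    rw [← LinearMap.ker_eq_bot, LinearMap.ker_eq_bot']
    intro x hx
    funext r
    have := congrFun hx (dn r)
    simpa [hTapp, tmF_dn, Finset.sum_apply] using this
  -- injectivity of L
  have hLinj : Function.Injective L := by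
    rw [← LinearMap.ker_eq_bot, LinearMap.ker_eq_bot']
    intro x hx
    refine triangular_zero (fun r p => c r p) hc x (fun r => ?_)
    have := congrFun hx (dn r)
    simp only [hLapp, hg, Finset.sum_apply, Pi.smul_apply, Pi.zero_apply, smul_eq_mul,
      tmF_dn, mul_ite, mul_one, mul_zero, Finset.sum_ite_eq', Finset.mem_filter,
      Finset.mem_univ, true_and] at this
    rw [Finset.sum_filter]
    calc ∑ p, (if p ≤ r then c r p * x p else 0)
        = ∑ p, (if p ≤ r then x p * c r p else 0) := by
          apply Finset.sum_congr rfl; intro p _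
          by_cases h : p ≤ r <;> simp [h, mul_comm]
      _ = 0 := this
  -- ranges
  have hranInd : LinearMap.range Ind = Submodule.span ℝ (Set.range (indF (α := α))) := by
    rw [hInd, Fintype.range_linearCombination]
  have hranT : LinearMap.range T = Submodule.span ℝ (Set.range (tmF (α := α))) := by
    rw [hT, Fintype.range_linearCombination]
  have hranL : LinearMap.range L = Submodule.span ℝ (Set.range (tmF (α := α))) := by
    have hle : LinearMap.range L ≤ Submodule.span ℝ (Set.range (tmF (α := α))) := by
      rw [hL, Fintype.range_linearCombination]
      apply Submodule.span_le.mpr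
      rintro _ ⟨p, rfl⟩
      apply Submodule.sum_mem
      intro q _
      exact Submodule.smul_mem _ _ (Submodule.subset_span (Set.mem_range_self q))
    refine Submodule.eq_of_le_of_finrank_eq hle ?_
    rw [← hranT, LinearMap.finrank_range_of_inj hLinj, LinearMap.finrank_range_of_inj hTinj]
  -- the difference lies in S
  have hdiff : ∀ x : α → ℝ, L x - Ind x ∈ S := by
    intro x
    rw [hLapp, hIndapp, ← Finset.sum_sub_distrib]
    apply Submodule.sum_mem
    intro p _
    rw [← smul_sub]
    refine Submodule.smul_mem _ _ ?_
    rw [← neg_sub]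
    exact Submodule.neg_mem _ (hrel p)
  have hmemW : ∀ x : α → ℝ, (Ind x ∈ W ↔ L x ∈ W) := by
    intro x
    have hd : L x - Ind x ∈ W := le_sup_left (a := S) (b := C) (hdiff x)
    constructor
    · intro h
      have := Submodule.add_mem W h hd
      rwa [add_sub_cancel] at this
    · intro h
      have := Submodule.sub_mem W h hd
      rwa [sub_sub_cancel] at this
  -- the two comap submodules coincide
  have hXY : Submodule.comap Ind (Submodule.span ℝ (Set.range (indF (α := α))) ⊓ W)
      = Submodule.comap L (Submodule.span ℝ (Set.range (tmF (α := α))) ⊓ W) := by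
    ext x
    simp only [Submodule.mem_comap, Submodule.mem_inf]
    constructor
    · rintro ⟨-, h2⟩
      exact ⟨hranL ▸ LinearMap.mem_range_self L x, (hmemW x).1 h2⟩
    · rintro ⟨-, h2⟩
      exact ⟨hranInd ▸ LinearMap.mem_range_self Ind x, (hmemW x).2 h2⟩
  -- conclude via equivMapOfInjective
  have key : ∀ (F : (α → ℝ) →ₗ[ℝ] (J α → ℝ)) (hF : Function.Injective F)
      (P : Submodule ℝ (J α → ℝ)), P ≤ LinearMap.range F →
      Module.finrank ℝ ↥(Submodule.comap F P) = Module.finrank ℝ ↥P := by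
    intro F hF P hle
    have e := Submodule.equivMapOfInjective F hF (Submodule.comap F P)
    rw [Submodule.map_comap_eq, inf_eq_right.mpr hle] at e
    exact e.finrank_eq
  rw [← key L hLinj _ (inf_le_left.trans hranL.ge),
    ← key Ind hIndinj _ (inf_le_left.trans hranInd.ge), hXY]

end
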